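/- arXiv:2007.11111 — 4 statements merged into one kernel-verified Lean document; each statement's English description precedes it below -/
import Mathlib

section
/- For every finite simple graph G with adjacency matrix A and for all vertices i, j, the 3-path matrix satisfies P₃(i,j) = Σ_{k∈V} A(i,k)·P₂(k,j) − (deg(i) − 1)·A(i,j) − 2·t(i)·[i = j]. In matrix form: P₃ = A·P₂ − diag(p₁ − 1)·A − 2·diag(c₃), where p₁ is the degree vector and c₃(i) = t(i). -/
open Finset Matrix SimpleGraph

variable {V : Type*} [Fintype V] [DecidableEq V]

/-- The number of simple paths (walks with no repeated vertices) of length `ℓ`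
from `i` to `j` in `G` (`P_ℓ(i,j)`). -/
def pathCount (G : SimpleGraph V) [DecidableRel G.Adj] (ℓ : ℕ) (i j : V) : ℕ :=
  ((G.finsetWalkLength ℓ i j).filter fun w => w.IsPath).card

/-- The number of simple paths of length `ℓ` having `v` as an endpoint (`p_ℓ(v)`). -/
def pathEndCount (G : SimpleGraph V) [DecidableRel G.Adj] (ℓ : ℕ) (v : V) : ℕ :=
  ∑ j, pathCount G ℓ v j

/-- The number of triangles (3-cliques) of `G` containing the vertex `v` (`t(v)`). -/
def triCount (G : SimpleGraph V) [DecidableRel G.Adj] (v : V) : ℕ :=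
  ((G.cliqueFinset 3).filter fun s => v ∈ s).card

/-- The number of triangles (3-cliques) of `G` containing both `i` and `j` (`C₃(i,j)`). -/
def triPairCount (G : SimpleGraph V) [DecidableRel G.Adj] (i j : V) : ℕ :=
  ((G.cliqueFinset 3).filter fun s => i ∈ s ∧ j ∈ s).card

open scoped Classical in
/-- The number of cycle subgraphs of length `ℓ` of `G` passing through vertex `i`:
each (unoriented) cycle subgraph through `i` corresponds to exactly two closed walks
of length `ℓ` based at `i` that are cycles (one for each direction of traversal). -/
noncomputable def cycleVertexCount (G : SimpleGraph V) [DecidableRel G.Adj] (ℓ : ℕ) (i : V) : ℕ :=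
  ((G.finsetWalkLength ℓ i i).filter fun w => w.IsCycle).card / 2

open scoped Classical in
/-- The number of cycle subgraphs of length `ℓ` of `G` containing the edge `{i, j}`:
each such (unoriented) cycle subgraph corresponds to exactly one closed walk of
length `ℓ` based at `i` that is a cycle and whose first step goes to `j`. -/
noncomputable def cycleEdgeCount (G : SimpleGraph V) [DecidableRel G.Adj] (ℓ : ℕ) (i j : V) : ℕ :=
  ((G.finsetWalkLength ℓ i i).filter fun w => w.IsCycle ∧ w.getVert 1 = j).card

open scoped Classical in
/-- The number of 4-cycle subgraphs of `G` in which `i` and `j` occupy diametrically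
opposite positions: each such (unoriented) cycle subgraph corresponds to exactly two
closed walks of length 4 based at `i` that are cycles with `j` as the second vertex. -/
noncomputable def cycleOppCount (G : SimpleGraph V) [DecidableRel G.Adj] (i j : V) : ℕ :=
  ((G.finsetWalkLength 4 i i).filter fun w => w.IsCycle ∧ w.getVert 2 = j).card / 2

/-- The number of 4-cliques of `G` containing the vertex `i`. -/
def k4Count (G : SimpleGraph V) [DecidableRel G.Adj] (i : V) : ℕ :=
  ((G.cliqueFinset 4).filter fun s => i ∈ s).card

/-- The number of 4-cliques of `G` containing both `i` and `j`. -/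
def k4PairCount (G : SimpleGraph V) [DecidableRel G.Adj] (i j : V) : ℕ :=
  ((G.cliqueFinset 4).filter fun s => i ∈ s ∧ j ∈ s).card



section Aux
variable {V : Type*} [Fintype V] [DecidableEq V]
set_option linter.unusedSectionVars false

lemma walk_len2 {G : SimpleGraph V} {u v : V} (w : G.Walk u v) (h : w.length = 2) :
    ∃ (m : V) (h1 : G.Adj u m) (h2 : G.Adj m v),
      w = SimpleGraph.Walk.cons h1 (SimpleGraph.Walk.cons h2 SimpleGraph.Walk.nil) := by
  cases w with
  | nil => simp at h
  | cons h1 p =>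
    cases p with
    | nil => simp at h
    | cons h2 q =>
      cases q with
      | nil => exact ⟨_, h1, h2, rfl⟩
      | cons h3 r => simp [SimpleGraph.Walk.length_cons] at h


lemma walk_len3 {G : SimpleGraph V} {u v : V} (w : G.Walk u v) (h : w.length = 3) :
    ∃ (k m : V) (h1 : G.Adj u k) (h2 : G.Adj k m) (h3 : G.Adj m v),
      w = SimpleGraph.Walk.cons h1 (SimpleGraph.Walk.cons h2
        (SimpleGraph.Walk.cons h3 SimpleGraph.Walk.nil)) := by
  cases w with
  | nil => simp at h
  | cons h1 p =>
    cases p with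
    | nil => simp at h
    | cons h2 q =>
      cases q with
      | nil => simp [SimpleGraph.Walk.length_cons] at h
      | cons h3 r =>
        cases r with
        | nil => exact ⟨_, _, h1, h2, h3, rfl⟩
        | cons h4 s => simp [SimpleGraph.Walk.length_cons] at h


lemma pathCount_two (G : SimpleGraph V) [DecidableRel G.Adj] (k j : V) :
    pathCount G 2 k j
      = (univ.filter fun m => G.Adj k m ∧ G.Adj m j ∧ k ≠ j).card := by
  classical
  apply Finset.card_bij (fun w _ => w.getVert 1)
  · intro w hw
    simp only [Finset.mem_filter, SimpleGraph.mem_finsetWalkLength_iff] at hw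
    obtain ⟨m, h1, h2, rfl⟩ := walk_len2 w hw.1
    have hp := hw.2
    simp only [SimpleGraph.Walk.isPath_def, SimpleGraph.Walk.support_cons,
      SimpleGraph.Walk.support_nil, List.nodup_cons, List.mem_cons,
      List.mem_singleton, List.not_mem_nil] at hp
    simp only [Finset.mem_filter, Finset.mem_univ, true_and]
    refine ⟨h1, h2, ?_⟩
    · intro hkj; subst hkj; tauto
  · intro w1 hw1 w2 hw2 hgv
    simp only [Finset.mem_filter, SimpleGraph.mem_finsetWalkLength_iff] at hw1 hw2
    obtain ⟨m1, h1, h2, rfl⟩ := walk_len2 w1 hw1.1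
    obtain ⟨m2, h1', h2', rfl⟩ := walk_len2 w2 hw2.1
    simp only [SimpleGraph.Walk.getVert_cons_succ, SimpleGraph.Walk.getVert_zero] at hgv
    subst hgv; rfl
  · intro m hm
    simp only [Finset.mem_filter, Finset.mem_univ, true_and] at hm
    obtain ⟨h1, h2, hkj⟩ := hm
    refine ⟨SimpleGraph.Walk.cons h1 (SimpleGraph.Walk.cons h2 SimpleGraph.Walk.nil), ?_, ?_⟩
    · simp only [Finset.mem_filter, SimpleGraph.mem_finsetWalkLength_iff,
        SimpleGraph.Walk.length_cons, SimpleGraph.Walk.length_nil,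
        SimpleGraph.Walk.isPath_def, SimpleGraph.Walk.support_cons,
        SimpleGraph.Walk.support_nil, List.nodup_cons]
      refine ⟨trivial, ?_⟩
      simp [h1.ne, h2.ne, hkj]
    · simp


lemma pathCount_three (G : SimpleGraph V) [DecidableRel G.Adj] (i j : V) :
    pathCount G 3 i j
      = ((univ : Finset (V × V)).filter fun p =>
          (G.Adj i p.1 ∧ G.Adj p.1 p.2 ∧ G.Adj p.2 j ∧ p.1 ≠ j) ∧ p.2 ≠ i ∧ i ≠ j).card := by
  classical
  apply Finset.card_bij (fun w _ => (w.getVert 1, w.getVert 2))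
  · intro w hw
    simp only [Finset.mem_filter, SimpleGraph.mem_finsetWalkLength_iff] at hw
    obtain ⟨k, m, h1, h2, h3, rfl⟩ := walk_len3 w hw.1
    have hp := hw.2
    simp only [SimpleGraph.Walk.isPath_def, SimpleGraph.Walk.support_cons,
      SimpleGraph.Walk.support_nil, List.nodup_cons, List.mem_cons,
      List.mem_singleton, List.not_mem_nil] at hp
    simp only [Finset.mem_filter, Finset.mem_univ, true_and,
      SimpleGraph.Walk.getVert_cons_succ, SimpleGraph.Walk.getVert_zero]
    refine ⟨⟨h1, h2, h3, ?_⟩, ?_, ?_⟩ <;> (intro he; first | (subst he; tauto) | (subst he; tauto))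
  · intro w1 hw1 w2 hw2 hgv
    simp only [Finset.mem_filter, SimpleGraph.mem_finsetWalkLength_iff] at hw1 hw2
    obtain ⟨k1, m1, h1, h2, h3, rfl⟩ := walk_len3 w1 hw1.1
    obtain ⟨k2, m2, h1', h2', h3', rfl⟩ := walk_len3 w2 hw2.1
    simp only [SimpleGraph.Walk.getVert_cons_succ, SimpleGraph.Walk.getVert_zero,
      Prod.mk.injEq] at hgv
    obtain ⟨rfl, rfl⟩ := hgv; rfl
  · intro p hp
    simp only [Finset.mem_filter, Finset.mem_univ, true_and] at hp
    obtain ⟨⟨h1, h2, h3, hkj⟩, hmi, hij⟩ := hp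
    refine ⟨SimpleGraph.Walk.cons h1 (SimpleGraph.Walk.cons h2
      (SimpleGraph.Walk.cons h3 SimpleGraph.Walk.nil)), ?_, ?_⟩
    · simp only [Finset.mem_filter, SimpleGraph.mem_finsetWalkLength_iff,
        SimpleGraph.Walk.length_cons, SimpleGraph.Walk.length_nil,
        SimpleGraph.Walk.isPath_def, SimpleGraph.Walk.support_cons,
        SimpleGraph.Walk.support_nil, List.nodup_cons]
      refine ⟨trivial, ?_⟩
      simp [h1.ne, h2.ne, h3.ne, hkj, hij, hmi, Ne.symm hmi]
    · simp


lemma two_mul_triCount (G : SimpleGraph V) [DecidableRel G.Adj] (i : V) :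
    ((univ : Finset (V × V)).filter fun p =>
        G.Adj i p.1 ∧ G.Adj p.1 p.2 ∧ G.Adj p.2 i).card = 2 * triCount G i := by
  classical
  rw [Finset.card_eq_sum_card_fiberwise
    (f := fun p : V × V => insert i {p.1, p.2})
    (t := (G.cliqueFinset 3).filter fun s => i ∈ s) ?_]
  · rw [Finset.sum_congr rfl ?_, Finset.sum_const, triCount, smul_eq_mul, mul_comm]
    intro s hs
    simp only [Finset.mem_filter, SimpleGraph.mem_cliqueFinset_iff] at hs
    obtain ⟨hcl, his⟩ := hs
    have hcard : (s.erase i).card = 2 := by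
      rw [Finset.card_erase_of_mem his, hcl.card_eq]
    obtain ⟨x, y, hxy, hxyeq⟩ := Finset.card_eq_two.mp hcard
    have hxs : x ∈ s.erase i := by rw [hxyeq]; simp
    have hys : y ∈ s.erase i := by rw [hxyeq]; simp
    have hxne : x ≠ i := Finset.ne_of_mem_erase hxs
    have hyne : y ≠ i := Finset.ne_of_mem_erase hys
    have hseq : s = insert i {x, y} := by
      rw [← hxyeq, Finset.insert_erase his]
    have hfib : (univ : Finset (V × V)).filter
        (fun p => (G.Adj i p.1 ∧ G.Adj p.1 p.2 ∧ G.Adj p.2 i) ∧ insert i {p.1, p.2} = s)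
        = {(x, y), (y, x)} := by
      ext p
      simp only [Finset.mem_filter, Finset.mem_univ, true_and, Finset.mem_insert,
        Finset.mem_singleton, Prod.ext_iff]
      constructor
      · rintro ⟨⟨h1, h2, h3⟩, heq⟩
        have hap : p.1 ∈ s.erase i := by
          rw [← heq]; simp [Finset.mem_erase, h1.ne']
        have hbp : p.2 ∈ s.erase i := by
          rw [← heq]; simp [Finset.mem_erase, h3.ne]
        rw [hxyeq] at hap hbp
        simp only [Finset.mem_insert, Finset.mem_singleton] at hap hbp
        have hne : p.1 ≠ p.2 := h2.ne
        rcases hap with rfl | rfl <;> rcases hbp with h | h <;> tauto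
      · have hix : G.Adj i x := hcl.1 (by rw [hseq]; simp) (by rw [hseq]; simp) (Ne.symm hxne)
        have hiy : G.Adj i y := hcl.1 (by rw [hseq]; simp) (by rw [hseq]; simp) (Ne.symm hyne)
        have hxy' : G.Adj x y := hcl.1 (by rw [hseq]; simp) (by rw [hseq]; simp) hxy
        rintro (⟨h1, h2⟩ | ⟨h1, h2⟩)
        · rw [h1, h2]
          exact ⟨⟨hix, hxy', hiy.symm⟩, by rw [hseq]⟩
        · rw [h1, h2]
          refine ⟨⟨hiy, hxy'.symm, hix.symm⟩, ?_⟩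
          rw [hseq]
          ext z; simp; tauto
    rw [Finset.filter_filter, hfib]
    rw [Finset.card_insert_of_notMem (by simp [Prod.ext_iff]; intro h; exact absurd h hxy),
      Finset.card_singleton]
  · intro p hp
    simp only [Finset.coe_filter, Set.mem_setOf_eq, Finset.mem_filter, Finset.mem_univ, true_and] at hp
    obtain ⟨h1, h2, h3⟩ := hp
    simp only [Finset.mem_coe, Finset.mem_filter, SimpleGraph.mem_cliqueFinset_iff]
    refine ⟨?_, by simp⟩
    rw [SimpleGraph.is3Clique_triple_iff]
    exact ⟨h1, h3.symm, h2⟩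

end Aux

/-- `P₃(i,j) = Σ_k A(i,k)·P₂(k,j) − (deg(i) − 1)·A(i,j) − 2·t(i)·[i=j]`;
in matrix form, `P₃ = A·P₂ − diag(p₁ − 1)·A − 2·diag(c₃)`. -/
theorem stmt10 (G : SimpleGraph V) [DecidableRel G.Adj] :
    (∀ i j : V, (pathCount G 3 i j : ℤ) =
      (∑ k, G.adjMatrix ℤ i k * (pathCount G 2 k j : ℤ))
        - ((G.degree i : ℤ) - 1) * G.adjMatrix ℤ i j
        - 2 * (triCount G i : ℤ) * (if i = j then 1 else 0)) ∧
    (Matrix.of fun i j => (pathCount G 3 i j : ℤ)) =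
      G.adjMatrix ℤ * (Matrix.of fun i j => (pathCount G 2 i j : ℤ))
        - Matrix.diagonal (fun i => (G.degree i : ℤ) - 1) * G.adjMatrix ℤ
        - 2 * Matrix.diagonal (fun i => (triCount G i : ℤ)) := by
    classical
  have sumeq : ∀ i j : V, (∑ k, G.adjMatrix ℤ i k * (pathCount G 2 k j : ℤ))
      = (((univ : Finset (V × V)).filter fun p =>
          G.Adj i p.1 ∧ G.Adj p.1 p.2 ∧ G.Adj p.2 j ∧ p.1 ≠ j).card : ℤ) := by
    intro i j
    have hB : ((univ : Finset (V × V)).filter fun p =>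
        G.Adj i p.1 ∧ G.Adj p.1 p.2 ∧ G.Adj p.2 j ∧ p.1 ≠ j).card
        = ∑ k, if G.Adj i k then
            ((univ.filter fun m => G.Adj k m ∧ G.Adj m j ∧ k ≠ j).card) else 0 := by
      rw [Finset.card_filter, Fintype.sum_prod_type]
      refine Finset.sum_congr rfl fun k _ => ?_
      by_cases h : G.Adj i k
      · simp only [h, if_true, true_and, Finset.card_filter]
      · simp [h]
    rw [hB]
    push_cast
    refine Finset.sum_congr rfl fun k _ => ?_
    rw [pathCount_two]
    by_cases h : G.Adj i k <;> simp [h]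
  have key : ∀ i j : V, (pathCount G 3 i j : ℤ) =
      (∑ k, G.adjMatrix ℤ i k * (pathCount G 2 k j : ℤ))
        - ((G.degree i : ℤ) - 1) * G.adjMatrix ℤ i j
        - 2 * (triCount G i : ℤ) * (if i = j then 1 else 0) := by
    intro i j
    rw [sumeq, pathCount_three]
    set B : Finset (V × V) := (univ : Finset (V × V)).filter fun p =>
      G.Adj i p.1 ∧ G.Adj p.1 p.2 ∧ G.Adj p.2 j ∧ p.1 ≠ j with hBdef
    by_cases hij : i = j
    · subst hij
      have hA : ((univ : Finset (V × V)).filter fun p =>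
          (G.Adj i p.1 ∧ G.Adj p.1 p.2 ∧ G.Adj p.2 i ∧ p.1 ≠ i) ∧ p.2 ≠ i ∧ i ≠ i).card = 0 := by
        simp
      have hBtri : B = (univ : Finset (V × V)).filter fun p =>
          G.Adj i p.1 ∧ G.Adj p.1 p.2 ∧ G.Adj p.2 i := by
        refine Finset.filter_congr fun p _ => ?_
        constructor
        · rintro ⟨h1, h2, h3, _⟩; exact ⟨h1, h2, h3⟩
        · rintro ⟨h1, h2, h3⟩; exact ⟨h1, h2, h3, h1.ne'⟩
      have hBcard : (B.card : ℤ) = 2 * (triCount G i : ℤ) := by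
        rw [hBtri, two_mul_triCount]; push_cast; ring
      rw [hA, hBcard]
      simp [SimpleGraph.irrefl]
    · have hfilter : ((univ : Finset (V × V)).filter fun p =>
          (G.Adj i p.1 ∧ G.Adj p.1 p.2 ∧ G.Adj p.2 j ∧ p.1 ≠ j) ∧ p.2 ≠ i ∧ i ≠ j)
          = B.filter fun p => p.2 ≠ i ∧ i ≠ j := by
        rw [hBdef, Finset.filter_filter]
      have hsplit := Finset.card_filter_add_card_filter_not
        (s := B) (p := fun p => p.2 ≠ i ∧ i ≠ j)
      have hCeq : B.filter (fun p => ¬(p.2 ≠ i ∧ i ≠ j)) = B.filter fun p => p.2 = i := by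
        refine Finset.filter_congr fun p _ => ?_
        constructor
        · intro h; by_contra hc; exact h ⟨hc, hij⟩
        · intro h hc; exact hc.1 h
      by_cases hadj : G.Adj i j
      · have hCcard : (B.filter fun p => p.2 = i).card = G.degree i - 1 := by
          have : (B.filter fun p => p.2 = i).card
              = ((G.neighborFinset i).erase j).card := by
            apply Finset.card_bij (fun p _ => p.1)
            · intro p hp
              simp only [hBdef, Finset.mem_filter, Finset.mem_univ, true_and] at hp
              obtain ⟨⟨h1, _, _, hkj⟩, _⟩ := hp
              simp [Finset.mem_erase, hkj, h1]
            · intro p1 hp1 p2 hp2 h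
              simp only [hBdef, Finset.mem_filter] at hp1 hp2
              exact Prod.ext h (hp1.2.trans hp2.2.symm)
            · intro k hk
              simp only [Finset.mem_erase, SimpleGraph.mem_neighborFinset] at hk
              refine ⟨(k, i), ?_, rfl⟩
              simp only [hBdef, Finset.mem_filter, Finset.mem_univ, true_and]
              exact ⟨⟨hk.2, hk.2.symm, hadj, hk.1⟩, by trivial⟩
          rw [this, Finset.card_erase_of_mem (by simpa using hadj),
            SimpleGraph.card_neighborFinset_eq_degree]
        have hdeg : 1 ≤ G.degree i := by
          have : 0 < G.degree i := by
            rw [SimpleGraph.degree_pos_iff_exists_adj]; exact ⟨j, hadj⟩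
          omega
        rw [hfilter]
        rw [hCeq] at hsplit
        have hcast : ((B.filter fun p => p.2 = i).card : ℤ) = (G.degree i : ℤ) - 1 := by
          rw [hCcard]; push_cast [Nat.cast_sub hdeg]; ring
        simp only [SimpleGraph.adjMatrix_apply, hadj, if_true, hij, if_false]
        have := congrArg (fun n : ℕ => (n : ℤ)) hsplit
        push_cast at this
        linarith [hcast, this]
      · have hCempty : B.filter (fun p => p.2 = i) = ∅ := by
          rw [Finset.filter_eq_empty_iff]
          rintro p hp rfl
          simp only [hBdef, Finset.mem_filter, Finset.mem_univ, true_and] at hp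
          exact hadj hp.2.2.1
        rw [hfilter]
        rw [hCeq, hCempty] at hsplit
        simp only [Finset.card_empty, add_zero] at hsplit
        simp only [SimpleGraph.adjMatrix_apply, hadj, if_false, hij]
        rw [hsplit]
        ring
  refine ⟨key, ?_⟩
  ext i j
  simp only [Matrix.sub_apply, Matrix.mul_apply, Matrix.of_apply, Matrix.diagonal_mul,
    two_mul, Matrix.add_apply, Matrix.diagonal_apply, ite_mul, zero_mul,
    Finset.sum_ite_eq, Finset.mem_univ, if_true]
  rw [key i j]
  split_ifs <;> ring
end

section
/- For every finite simple graph G and every vertex v, the number of dipper subgraphs of G in which v occupies a base position equals Σ_{j : j adjacent to v} C₃(v,j)·(deg(j) − 2), where C₃(v,j) is the number of triangles of G containing both v and j. -/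
open Finset Matrix SimpleGraph

variable {V : Type*} [Fintype V] [DecidableEq V]

lemma tri_ne {v a c : V} (h : ({v,a,c} : Finset V).card = 3) :
    v ≠ a ∧ v ≠ c ∧ a ≠ c := by
  refine ⟨?_, ?_, ?_⟩ <;> rintro rfl
  · simp at h
    have := Finset.card_insert_le v {c}; simp at this; omega
  · have : ({v,a,v} : Finset V) = {v,a} := by ext x; simp; tauto
    rw [this] at h
    have := Finset.card_insert_le v {a}; simp at this; omega
  · simp at h
    have := Finset.card_insert_le v {a}; simp at this; omega

lemma tri_props {G : SimpleGraph V} {v a c : V} (h : G.IsNClique 3 ({v,a,c} : Finset V)) :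
    G.Adj v a ∧ G.Adj v c ∧ G.Adj a c := by
  obtain ⟨h1, h2, h3⟩ := tri_ne h.2
  exact ⟨h.1 (by simp) (by simp) h1, h.1 (by simp) (by simp) h2, h.1 (by simp) (by simp) h3⟩

lemma card_third {G : SimpleGraph V} [DecidableRel G.Adj] {v a : V} (hva : G.Adj v a) :
    (Finset.univ.filter fun c => G.IsNClique 3 ({v,a,c} : Finset V)).card
      = triPairCount G v a := by
  unfold triPairCount
  apply Finset.card_bij (fun c _ => ({v,a,c} : Finset V))
  · intro c hc
    simp only [Finset.mem_filter, Finset.mem_univ, true_and] at hc ⊢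
    exact ⟨SimpleGraph.mem_cliqueFinset_iff.2 hc, by simp, by simp⟩
  · intro c1 h1 c2 h2 heq
    simp only [Finset.mem_filter, Finset.mem_univ, true_and] at h1 h2
    obtain ⟨hva1, hvc1, hac1⟩ := tri_ne h1.2
    have : c1 ∈ ({v,a,c2} : Finset V) := heq ▸ (by simp)
    simp at this
    rcases this with h | h | h
    · exact absurd h.symm hvc1
    · exact absurd h.symm hac1
    · exact h
  · intro s hs
    simp only [Finset.mem_filter] at hs
    obtain ⟨hs3, hv, ha⟩ := hs
    rw [SimpleGraph.mem_cliqueFinset_iff] at hs3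
    have hsub : ({v, a} : Finset V) ⊆ s := by
      intro x hx; simp at hx; rcases hx with rfl | rfl <;> assumption
    have hcard2 : ({v, a} : Finset V).card = 2 := by
      rw [Finset.card_insert_of_notMem (by simp [hva.ne]), Finset.card_singleton]
    have : (s \ {v, a}).card = 1 := by
      rw [Finset.card_sdiff_of_subset hsub, hs3.2, hcard2]
    obtain ⟨c, hc⟩ := Finset.card_eq_one.1 this
    have hcs : c ∈ s ∧ c ∉ ({v,a} : Finset V) := by
      have : c ∈ s \ ({v,a} : Finset V) := hc ▸ (by simp)
      simpa using this
    refine ⟨c, Finset.mem_filter.2 ⟨Finset.mem_univ _, ?_⟩, ?_⟩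
    · have heq : s = ({v,a,c} : Finset V) := by
        apply Finset.eq_of_subset_of_card_le
        · intro x hx; simp; by_cases h1 : x = v; · tauto
          by_cases h2 : x = a; · tauto
          right; right
          have : x ∈ s \ ({v,a} : Finset V) := by simp [hx, h1, h2]
          rw [hc] at this; simpa using this
        · rw [hs3.2]
          have hcv : c ≠ v := by intro h; apply hcs.2; simp [h]
          have hca : c ≠ a := by intro h; apply hcs.2; simp [h]
          rw [Finset.card_insert_of_notMem (by simp [hva.ne, hcv.symm]),
              Finset.card_insert_of_notMem (by simp [hca.symm]), Finset.card_singleton]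
      rw [← heq]; exact hs3
    · have heq : s = ({v,a,c} : Finset V) := by
        apply Finset.eq_of_subset_of_card_le
        · intro x hx; simp; by_cases h1 : x = v; · tauto
          by_cases h2 : x = a; · tauto
          right; right
          have : x ∈ s \ ({v,a} : Finset V) := by simp [hx, h1, h2]
          rw [hc] at this; simpa using this
        · rw [hs3.2]
          have hcv : c ≠ v := by intro h; apply hcs.2; simp [h]
          have hca : c ≠ a := by intro h; apply hcs.2; simp [h]
          rw [Finset.card_insert_of_notMem (by simp [hva.ne, hcv.symm]),
              Finset.card_insert_of_notMem (by simp [hca.symm]), Finset.card_singleton]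
      exact heq.symm

lemma card_w {G : SimpleGraph V} [DecidableRel G.Adj] {v a c : V}
    (h : G.IsNClique 3 ({v,a,c} : Finset V)) :
    (Finset.univ.filter fun w => G.Adj a w ∧ w ∉ ({v,a,c} : Finset V)).card
      = G.degree a - 2 ∧ 2 ≤ G.degree a := by
  obtain ⟨hva, hvc, hac⟩ := tri_props h
  obtain ⟨-, hvc', -⟩ := tri_ne h.2
  have hsub : ({v, c} : Finset V) ⊆ G.neighborFinset a := by
    intro x hx; simp at hx; rcases hx with rfl | rfl
    · exact (SimpleGraph.mem_neighborFinset _ _ _).2 hva.symm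
    · exact (SimpleGraph.mem_neighborFinset _ _ _).2 hac
  have hcard2 : ({v, c} : Finset V).card = 2 := by
    rw [Finset.card_insert_of_notMem (by simp [hvc']), Finset.card_singleton]
  have h2 : 2 ≤ G.degree a := by
    rw [SimpleGraph.degree, ← hcard2]; exact Finset.card_le_card hsub
  refine ⟨?_, h2⟩
  have hset : (Finset.univ.filter fun w => G.Adj a w ∧ w ∉ ({v,a,c} : Finset V))
      = G.neighborFinset a \ {v, c} := by
    ext w
    simp only [Finset.mem_filter, Finset.mem_univ, true_and, Finset.mem_sdiff,
      SimpleGraph.mem_neighborFinset, Finset.mem_insert, Finset.mem_singleton]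
    constructor
    · rintro ⟨h1, h2⟩; push_neg at h2; exact ⟨h1, by tauto⟩
    · rintro ⟨h1, h2⟩; push_neg at h2
      refine ⟨h1, ?_⟩; push_neg
      exact ⟨h2.1, h1.ne', h2.2⟩
  rw [hset, Finset.card_sdiff_of_subset hsub, hcard2, SimpleGraph.degree]


/-- For every vertex `v`, the number of dipper subgraphs in which `v`
occupies a base position equals `Σ_{j ~ v} C₃(v,j)·(deg(j) − 2)`. A dipper with base
vertex `v` is encoded by `(a, w, c)`: center `a = t.1`, pendant `w = t.2.1`, and the
other base vertex `c = t.2.2`. -/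
theorem stmt15 (G : SimpleGraph V) [DecidableRel G.Adj] (v : V) :
    ((Finset.univ.filter fun t : V × V × V =>
        G.IsNClique 3 {v, t.1, t.2.2} ∧ G.Adj t.1 t.2.1 ∧
          t.2.1 ∉ ({v, t.1, t.2.2} : Finset V)).card : ℤ) =
      ∑ j ∈ G.neighborFinset v, (triPairCount G v j : ℤ) * ((G.degree j : ℤ) - 2) := by
  classical
  have key : ∀ a : V,
      (∑ w : V, ∑ c : V, (if G.IsNClique 3 ({v, a, c} : Finset V) ∧ G.Adj a w ∧
          w ∉ ({v, a, c} : Finset V) then (1:ℤ) else 0)) =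
      (if G.Adj v a then (triPairCount G v a : ℤ) * ((G.degree a : ℤ) - 2) else 0) := by
    intro a
    rw [Finset.sum_comm]
    by_cases hva : G.Adj v a
    · rw [if_pos hva]
      have hinner : ∀ c : V, (∑ w : V, if G.IsNClique 3 ({v, a, c} : Finset V) ∧ G.Adj a w ∧
          w ∉ ({v, a, c} : Finset V) then (1:ℤ) else 0)
          = if G.IsNClique 3 ({v,a,c} : Finset V) then ((G.degree a : ℤ) - 2) else 0 := by
        intro c
        by_cases htri : G.IsNClique 3 ({v,a,c} : Finset V)
        · rw [if_pos htri]
          simp only [htri, true_and]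
          rw [Finset.sum_boole]
          obtain ⟨hcard, h2⟩ := card_w htri
          rw [hcard]
          push_cast [Nat.cast_sub h2]
          ring
        · simp [htri]
      rw [Finset.sum_congr rfl (fun c _ => hinner c), Finset.sum_ite, Finset.sum_const,
        Finset.sum_const_zero, add_zero, ← card_third hva]
      push_cast
      ring
    · rw [if_neg hva]
      refine Finset.sum_eq_zero fun c _ => Finset.sum_eq_zero fun w _ => ?_
      rw [if_neg]
      rintro ⟨htri, -⟩
      exact hva (tri_props htri).1
  rw [Finset.card_filter]
  push_cast
  rw [Fintype.sum_prod_type]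
  simp only [Fintype.sum_prod_type]
  rw [Finset.sum_congr rfl (fun a _ => key a)]
  rw [SimpleGraph.neighborFinset_eq_filter, Finset.sum_filter]
end

section
/- For every finite simple graph G and every vertex v, the number of diamond subgraphs of G in which v occupies an off-cord position equals (1/2)·Σ_{(a,b) : a adjacent to v, b adjacent to v, a adjacent to b} (C₃(a,b) − 1), where the sum is over ordered pairs (a,b) and C₃(a,b) is the number of triangles of G containing both a and b. -/
open Finset Matrix SimpleGraph

variable {V : Type*} [Fintype V] [DecidableEq V]

lemma tri_aux (G : SimpleGraph V) [DecidableRel G.Adj] {v a b : V}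
    (hva : G.Adj v a) (hvb : G.Adj v b) (hab : G.Adj a b) :
    (Finset.univ.filter fun w => G.IsNClique 3 (insert w ({a, b} : Finset V)) ∧ w ≠ v).card + 1
      = triPairCount G a b := by
  classical
  have hW : (Finset.univ.filter fun w => G.IsNClique 3 (insert w ({a, b} : Finset V))).card
      = triPairCount G a b := by
    apply Finset.card_bij (fun w _ => insert w ({a, b} : Finset V))
    · intro w hw
      simp only [mem_filter, mem_univ, true_and] at hw
      simp [SimpleGraph.mem_cliqueFinset_iff, hw]
    · intro w hw w' hw' h
      simp only [mem_filter, mem_univ, true_and] at hw hw'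
      have hwn : w ∉ ({a, b} : Finset V) := by
        intro hmem
        have := hw.card_eq
        rw [Finset.insert_eq_self.2 hmem] at this
        have : ({a, b} : Finset V).card ≤ 2 := Finset.card_insert_le _ _
        omega
      have hwn' : w' ∉ ({a, b} : Finset V) := by
        intro hmem
        have := hw'.card_eq
        rw [Finset.insert_eq_self.2 hmem] at this
        have : ({a, b} : Finset V).card ≤ 2 := Finset.card_insert_le _ _
        omega
      have : w ∈ insert w' ({a, b} : Finset V) := h ▸ Finset.mem_insert_self w _
      rcases Finset.mem_insert.1 this with h' | h'
      · exact h'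
      · exact absurd h' hwn
    · intro s hs
      simp only [mem_filter, SimpleGraph.mem_cliqueFinset_iff] at hs
      obtain ⟨hcl, ha, hb⟩ := hs
      have hsub : ({a, b} : Finset V) ⊆ s := by
        intro x hx
        rcases Finset.mem_insert.1 hx with h | h
        · exact h ▸ ha
        · exact (Finset.mem_singleton.1 h) ▸ hb
      have hab' : a ≠ b := hab.ne
      have hcard2 : ({a, b} : Finset V).card = 2 := Finset.card_pair hab'
      have hd : (s \ ({a, b} : Finset V)).card = 1 := by
        rw [Finset.card_sdiff_of_subset hsub, hcl.card_eq, hcard2]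
      obtain ⟨w, hw⟩ := Finset.card_eq_one.1 hd
      have hws : s = insert w ({a, b} : Finset V) := by
        have hwmem : w ∈ s \ ({a, b} : Finset V) := hw ▸ Finset.mem_singleton_self w
        refine (Finset.eq_of_subset_of_card_le ?_ ?_).symm
        · intro x hx
          rcases Finset.mem_insert.1 hx with h | h
          · exact h ▸ (Finset.mem_sdiff.1 hwmem).1
          · exact hsub h
        · have hwn : w ∉ ({a, b} : Finset V) := (Finset.mem_sdiff.1 hwmem).2
          rw [hcl.card_eq, Finset.card_insert_of_notMem hwn, hcard2]
      refine ⟨w, ?_, hws.symm⟩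
      simp only [mem_filter, mem_univ, true_and]
      exact hws ▸ hcl
  have hv : v ∈ (Finset.univ.filter fun w => G.IsNClique 3 (insert w ({a, b} : Finset V))) := by
    simp only [mem_filter, mem_univ, true_and]
    rw [show insert v ({a, b} : Finset V) = {v, a, b} from rfl]
    exact SimpleGraph.is3Clique_triple_iff.2 ⟨hva, hvb, hab⟩
  have herase : (Finset.univ.filter fun w =>
      G.IsNClique 3 (insert w ({a, b} : Finset V)) ∧ w ≠ v)
      = (Finset.univ.filter fun w => G.IsNClique 3 (insert w ({a, b} : Finset V))).erase v := by
    ext w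
    simp only [mem_filter, mem_univ, true_and, Finset.mem_erase]
    tauto
  rw [herase, Finset.card_erase_add_one hv, hW]


/-- For every vertex `v`, the number of diamond subgraphs in which `v`
occupies an off-cord position equals
`(1/2)·Σ_{(a,b) : a ~ v, b ~ v, a ~ b} (C₃(a,b) − 1)` (sum over ordered pairs). A diamond
with off-cord vertex `v` is encoded by its cord pair `p.1` and the other off-cord
vertex `p.2`. -/
theorem stmt17 (G : SimpleGraph V) [DecidableRel G.Adj] (v : V) :
    ((Finset.univ.filter fun p : Finset V × V =>
        p.1.card = 2 ∧ G.IsNClique 3 (insert v p.1) ∧ G.IsNClique 3 (insert p.2 p.1) ∧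
          p.2 ≠ v).card : ℚ) =
      (1 / 2) * ∑ a, ∑ b,
        if G.Adj v a ∧ G.Adj v b ∧ G.Adj a b then (triPairCount G a b : ℚ) - 1 else 0 := by
  classical
  set P := (Finset.univ.filter fun p : Finset V × V =>
      p.1.card = 2 ∧ G.IsNClique 3 (insert v p.1) ∧ G.IsNClique 3 (insert p.2 p.1) ∧
        p.2 ≠ v) with hP
  set T := (Finset.univ.filter fun t : V × V × V =>
      G.Adj v t.1 ∧ G.Adj v t.2.1 ∧ G.Adj t.1 t.2.1 ∧
        G.IsNClique 3 (insert t.2.2 ({t.1, t.2.1} : Finset V)) ∧ t.2.2 ≠ v) with hT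
  -- T membership characterization
  have hTmem : ∀ t : V × V × V, t ∈ T ↔
      G.Adj v t.1 ∧ G.Adj v t.2.1 ∧ G.Adj t.1 t.2.1 ∧
        G.IsNClique 3 (insert t.2.2 ({t.1, t.2.1} : Finset V)) ∧ t.2.2 ≠ v := by
    intro t; simp [hT]
  -- key1 : T.card = 2 * P.card
  have key1 : T.card = 2 * P.card := by
    have hmap : ∀ t ∈ T, (({t.1, t.2.1} : Finset V), t.2.2) ∈ P := by
      intro t ht
      rw [hTmem] at ht
      obtain ⟨hva, hvb, hab, hcl, hne⟩ := ht
      simp only [hP, mem_filter, mem_univ, true_and]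
      refine ⟨Finset.card_pair hab.ne, ?_, hcl, hne⟩
      exact SimpleGraph.is3Clique_triple_iff.2 ⟨hva, hvb, hab⟩
    rw [Finset.card_eq_sum_card_fiberwise hmap]
    have hfib : ∀ p ∈ P,
        (T.filter fun t => (({t.1, t.2.1} : Finset V), t.2.2) = p).card = 2 := by
      intro p hp
      simp only [hP, mem_filter, mem_univ, true_and] at hp
      obtain ⟨hcard, hclv, hclw, hne⟩ := hp
      obtain ⟨x, y, hxy, hs⟩ := Finset.card_eq_two.1 hcard
      have hadj : G.Adj v x ∧ G.Adj v y ∧ G.Adj x y := by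
        have : G.IsNClique 3 ({v, x, y} : Finset V) := by
          rw [show ({v, x, y} : Finset V) = insert v p.1 from by rw [hs]]
          exact hclv
        exact SimpleGraph.is3Clique_triple_iff.1 this
      have heq : T.filter (fun t => (({t.1, t.2.1} : Finset V), t.2.2) = p)
          = {(x, y, p.2), (y, x, p.2)} := by
        ext t
        simp only [Finset.mem_filter, Finset.mem_insert, Finset.mem_singleton, Prod.ext_iff]
        constructor
        · rintro ⟨ht, hpair, hw⟩
          rw [hTmem] at ht
          have hab : t.1 ≠ t.2.1 := ht.2.2.1.ne
          have h1 : t.1 ∈ ({x, y} : Finset V) := by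
            rw [← hs, ← hpair]; exact Finset.mem_insert_self _ _
          have h2 : t.2.1 ∈ ({x, y} : Finset V) := by
            rw [← hs, ← hpair]; exact Finset.mem_insert_of_mem (Finset.mem_singleton_self _)
          simp only [Finset.mem_insert, Finset.mem_singleton] at h1 h2
          rcases h1 with h1 | h1 <;> rcases h2 with h2 | h2
          · exact absurd (h1.trans h2.symm) hab
          · left; exact ⟨h1, h2, hw⟩
          · right; exact ⟨h1, h2, hw⟩
          · exact absurd (h1.trans h2.symm) hab
        · rintro (⟨h1, h2, h3⟩ | ⟨h1, h2, h3⟩)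
          · refine ⟨?_, ?_, h3⟩
            · rw [hTmem, h1, h2, h3]
              refine ⟨hadj.1, hadj.2.1, hadj.2.2, ?_, hne⟩
              rw [show ({x, y} : Finset V) = p.1 from hs.symm]; exact hclw
            · rw [h1, h2]; exact hs.symm
          · refine ⟨?_, ?_, h3⟩
            · rw [hTmem, h1, h2, h3]
              refine ⟨hadj.2.1, hadj.1, hadj.2.2.symm, ?_, hne⟩
              rw [show ({y, x} : Finset V) = p.1 from by rw [hs]; exact Finset.pair_comm y x]
              exact hclw
            · rw [h1, h2, Finset.pair_comm]; exact hs.symm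
      rw [heq, Finset.card_insert_of_notMem, Finset.card_singleton]
      simp only [Finset.mem_singleton, Prod.ext_iff, not_and]
      intro h; exact absurd h hxy
    rw [Finset.sum_congr rfl hfib, Finset.sum_const, smul_eq_mul, mul_comm]
  -- key2 : T.card as double sum
  have key2 : (T.card : ℚ) = ∑ a, ∑ b,
      if G.Adj v a ∧ G.Adj v b ∧ G.Adj a b then (triPairCount G a b : ℚ) - 1 else 0 := by
    have h1 : T.card = ∑ a, ∑ b,
        (Finset.univ.filter fun w : V =>
          (G.Adj v a ∧ G.Adj v b ∧ G.Adj a b) ∧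
            G.IsNClique 3 (insert w ({a, b} : Finset V)) ∧ w ≠ v).card := by
      rw [hT, Finset.card_filter, Fintype.sum_prod_type]
      refine Finset.sum_congr rfl fun a _ => ?_
      rw [Fintype.sum_prod_type]
      refine Finset.sum_congr rfl fun b _ => ?_
      rw [Finset.card_filter]
      refine Finset.sum_congr rfl fun w _ => ?_
      congr 1
      simp only [eq_iff_iff]
      tauto
    rw [h1]
    push_cast
    refine Finset.sum_congr rfl fun a _ => Finset.sum_congr rfl fun b _ => ?_
    by_cases h : G.Adj v a ∧ G.Adj v b ∧ G.Adj a b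
    · rw [if_pos h]
      have := tri_aux G h.1 h.2.1 h.2.2
      have hfe : (Finset.univ.filter fun w : V =>
          (G.Adj v a ∧ G.Adj v b ∧ G.Adj a b) ∧
            G.IsNClique 3 (insert w ({a, b} : Finset V)) ∧ w ≠ v)
          = (Finset.univ.filter fun w : V =>
            G.IsNClique 3 (insert w ({a, b} : Finset V)) ∧ w ≠ v) := by
        refine Finset.filter_congr fun w _ => ?_
        tauto
      rw [hfe, ← this]
      push_cast
      ring
    · rw [if_neg h]
      have : (Finset.univ.filter fun w : V =>
          (G.Adj v a ∧ G.Adj v b ∧ G.Adj a b) ∧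
            G.IsNClique 3 (insert w ({a, b} : Finset V)) ∧ w ≠ v) = ∅ := by
        refine Finset.filter_false_of_mem fun w _ => ?_
        tauto
      rw [this]
      simp
  rw [← key2, key1]
  push_cast
  ring
end

section
/- For every finite simple graph G and every vertex v, the number of diamond subgraphs of G in which v occupies an on-cord position equals Σ_{j : j adjacent to v} P₂(v,j)·(P₂(v,j) − 1)/2, where P₂(v,j) is the number of common neighbors of v and j. -/
open Finset Matrix SimpleGraph

variable {V : Type*} [Fintype V] [DecidableEq V]

lemma walk_len_two {G : SimpleGraph V} {v j : V} (w : G.Walk v j) (h : w.length = 2) :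
    ∃ (x : V) (h1 : G.Adj v x) (h2 : G.Adj x j),
      w = SimpleGraph.Walk.cons h1 (SimpleGraph.Walk.cons h2 SimpleGraph.Walk.nil) := by
  cases w with
  | nil => simp at h
  | cons h1 w' =>
    cases w' with
    | nil => simp at h
    | cons h2 w'' =>
      cases w'' with
      | nil => exact ⟨_, h1, h2, rfl⟩
      | cons h3 w''' => simp [SimpleGraph.Walk.length_cons] at h


lemma pathCount_two_s18 (G : SimpleGraph V) [DecidableRel G.Adj] {v j : V} (hvj : v ≠ j) :
    pathCount G 2 v j = (G.neighborFinset v ∩ G.neighborFinset j).card := by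
  classical
  unfold pathCount
  apply Finset.card_bij (fun w _ => w.getVert 1)
  · rintro w hw
    simp only [Finset.mem_filter, SimpleGraph.mem_finsetWalkLength_iff] at hw
    obtain ⟨x, h1, h2, rfl⟩ := walk_len_two w hw.1
    simpa [Finset.mem_inter] using ⟨h1, h2.symm⟩
  · rintro w₁ hw₁ w₂ hw₂ he
    simp only [Finset.mem_filter, SimpleGraph.mem_finsetWalkLength_iff] at hw₁ hw₂
    obtain ⟨x₁, a1, b1, rfl⟩ := walk_len_two w₁ hw₁.1
    obtain ⟨x₂, a2, b2, rfl⟩ := walk_len_two w₂ hw₂.1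
    simp only [SimpleGraph.Walk.getVert_cons_succ, SimpleGraph.Walk.getVert_zero] at he
    subst he
    rfl
  · rintro x hx
    simp only [Finset.mem_inter, SimpleGraph.mem_neighborFinset] at hx
    refine ⟨SimpleGraph.Walk.cons hx.1 (SimpleGraph.Walk.cons hx.2.symm SimpleGraph.Walk.nil), ?_, rfl⟩
    simp only [Finset.mem_filter, SimpleGraph.mem_finsetWalkLength_iff]
    constructor
    · simp
    · simp [SimpleGraph.Walk.isPath_def, hvj, hx.1.ne, hx.2.ne']


/-- For every vertex `v`, the number of diamond subgraphs in which `v`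
occupies an on-cord position equals `Σ_{j ~ v} P₂(v,j)·(P₂(v,j) − 1)/2`. A diamond with
on-cord vertex `v` is encoded by the other cord vertex `p.1` and the off-cord pair
`p.2` (two common neighbors of `v` and `p.1`). -/
theorem stmt18 (G : SimpleGraph V) [DecidableRel G.Adj] (v : V) :
    ((Finset.univ.filter fun p : V × Finset V =>
        G.Adj v p.1 ∧ p.2.card = 2 ∧ ∀ x ∈ p.2, G.Adj v x ∧ G.Adj p.1 x).card : ℚ) =
      ∑ j ∈ G.neighborFinset v,
        (pathCount G 2 v j : ℚ) * ((pathCount G 2 v j : ℚ) - 1) / 2 := by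
  classical
  set S := Finset.univ.filter fun p : V × Finset V =>
      G.Adj v p.1 ∧ p.2.card = 2 ∧ ∀ x ∈ p.2, G.Adj v x ∧ G.Adj p.1 x with hS
  have hfib : S.card = ∑ j ∈ G.neighborFinset v,
      ((G.neighborFinset v ∩ G.neighborFinset j).card).choose 2 := by
    rw [Finset.card_eq_sum_card_fiberwise
      (f := fun p : V × Finset V => p.1) (t := G.neighborFinset v) ?hmap]
    case hmap =>
      rintro p hp
      simp only [Finset.mem_coe, hS, Finset.mem_filter] at hp
      simpa using hp.2.1
    refine Finset.sum_congr rfl fun j hj => ?_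
    rw [SimpleGraph.mem_neighborFinset] at hj
    rw [← Finset.card_powersetCard]
    apply Finset.card_bij (fun p _ => p.2)
    · rintro p hp
      simp only [hS, Finset.mem_filter] at hp
      obtain ⟨⟨-, ⟨hadj, hcard, hall⟩⟩, hfst⟩ := hp
      subst hfst
      rw [Finset.mem_powersetCard]
      refine ⟨fun x hx => ?_, hcard⟩
      simp only [Finset.mem_inter, SimpleGraph.mem_neighborFinset]
      exact hall x hx
    · rintro p₁ hp₁ p₂ hp₂ he
      simp only [hS, Finset.mem_filter] at hp₁ hp₂
      exact Prod.ext (hp₁.2.trans hp₂.2.symm) he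
    · rintro s hs
      rw [Finset.mem_powersetCard] at hs
      refine ⟨(j, s), ?_, rfl⟩
      simp only [hS, Finset.mem_filter, Finset.mem_univ, true_and]
      refine ⟨⟨hj, hs.2, fun x hx => ?_⟩, trivial⟩
      have := hs.1 hx
      simpa [Finset.mem_inter] using this
  rw [hfib]
  push_cast
  refine Finset.sum_congr rfl fun j hj => ?_
  rw [SimpleGraph.mem_neighborFinset] at hj
  rw [pathCount_two_s18 G hj.ne, Nat.cast_choose_two]
end
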